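/- Let ε₁,…,εₙ be i.i.d. Rademacher random variables (taking values ±1 with probability 1/2) and let B ⊆ ℝⁿ be a finite nonempty set. Then E[sup_{b∈B} Σᵢ εᵢ bᵢ] ≤ (max_{b∈B} ‖b‖₂) · √(2 log |B|). -/

import Mathlib

open MeasureTheory ProbabilityTheory Filter
open scoped ENNReal
open MeasureTheory ProbabilityTheory Filter
open scoped ENNReal

lemma rademacher_integral {Ω : Type*} [MeasurableSpace Ω] (P : Measure Ω) (X : Ω → ℝ)
    (hX : Measurable X)
    (hlaw : P.map X =
      (1 / 2 : ℝ≥0∞) • Measure.dirac (1 : ℝ) + (1 / 2 : ℝ≥0∞) • Measure.dirac (-1 : ℝ))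
    (f : ℝ → ℝ) (hf : Continuous f) :
    ∫ ω, f (X ω) ∂P = (f 1 + f (-1)) / 2 := by
  rw [← integral_map hX.aemeasurable hf.aestronglyMeasurable, hlaw]
  have h1 : Integrable f ((1/2 : ℝ≥0∞) • Measure.dirac (1:ℝ)) :=
    ((integrable_const (f 1)).congr (ae_eq_dirac f).symm).smul_measure (by norm_num)
  have h2 : Integrable f ((1/2 : ℝ≥0∞) • Measure.dirac (-1:ℝ)) :=
    ((integrable_const (f (-1))).congr (ae_eq_dirac f).symm).smul_measure (by norm_num)
  rw [integral_add_measure h1 h2, integral_smul_measure, integral_smul_measure,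
    integral_dirac, integral_dirac]
  simp [smul_eq_mul]
  ring

lemma rademacher_ae {Ω : Type*} [MeasurableSpace Ω] (P : Measure Ω) (X : Ω → ℝ)
    (hX : Measurable X)
    (hlaw : P.map X =
      (1 / 2 : ℝ≥0∞) • Measure.dirac (1 : ℝ) + (1 / 2 : ℝ≥0∞) • Measure.dirac (-1 : ℝ)) :
    ∀ᵐ ω ∂P, X ω = 1 ∨ X ω = -1 := by
  have hs : MeasurableSet ({1, -1} : Set ℝ) :=
    ((Set.finite_singleton (-1:ℝ)).insert 1).measurableSet
  have h0 : P (X ⁻¹' ({1, -1} : Set ℝ)ᶜ) = 0 := by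
    rw [← Measure.map_apply hX hs.compl, hlaw]
    simp [Measure.dirac_apply', hs.compl]
  have heq : {ω | ¬(X ω = 1 ∨ X ω = -1)} = X ⁻¹' ({1, -1} : Set ℝ)ᶜ := by
    ext ω; simp [not_or]
  rw [ae_iff, heq]
  exact h0

lemma integrable_of_ae_abs_bound {Ω : Type*} [MeasurableSpace Ω] {P : Measure Ω}
    [IsFiniteMeasure P] {f : Ω → ℝ} (C : ℝ) (hm : AEStronglyMeasurable f P)
    (h : ∀ᵐ ω ∂P, |f ω| ≤ C) : Integrable f P :=
  Integrable.mono' (integrable_const C) hm (by simpa using h)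

set_option maxHeartbeats 1000000 in
/-- If `ε₁, …, εₙ` are i.i.d. Rademacher random variables and
`B ⊆ ℝⁿ` is a finite nonempty set, then
`E[sup_{b ∈ B} ∑ i, εᵢ bᵢ] ≤ (max_{b ∈ B} ‖b‖₂) * √(2 log |B|)`. -/
theorem stmt0 {Ω : Type*} [MeasurableSpace Ω] (P : Measure Ω) [IsProbabilityMeasure P]
    (n : ℕ) (ε : Fin n → Ω → ℝ) (hmeas : ∀ i, Measurable (ε i))
    (hindep : iIndepFun ε P)
    (hlaw : ∀ i, P.map (ε i) =
      (1 / 2 : ℝ≥0∞) • Measure.dirac (1 : ℝ) + (1 / 2 : ℝ≥0∞) • Measure.dirac (-1 : ℝ))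
    (B : Finset (EuclideanSpace ℝ (Fin n))) (hB : B.Nonempty) :
    ∫ ω, B.sup' hB (fun b => ∑ i, ε i ω * b i) ∂P
      ≤ (B.sup' hB fun b => ‖b‖) * Real.sqrt (2 * Real.log B.card) := by
  classical
  set g : EuclideanSpace ℝ (Fin n) → Ω → ℝ := fun b ω => ∑ i, ε i ω * b i with hgdef
  have hgmeas : ∀ b, Measurable (g b) := fun b =>
    Finset.measurable_sum _ (fun i _ => (hmeas i).mul_const _)
  have hae : ∀ᵐ ω ∂P, ∀ i, ε i ω = 1 ∨ ε i ω = -1 :=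
    ae_all_iff.mpr fun i => rademacher_ae P (ε i) (hmeas i) (hlaw i)
  -- a.e. bound on g b
  have habs : ∀ᵐ ω ∂P, ∀ b : EuclideanSpace ℝ (Fin n), |g b ω| ≤ ∑ i, |b i| := by
    filter_upwards [hae] with ω hω b
    calc |g b ω| ≤ ∑ i, |ε i ω * b i| := Finset.abs_sum_le_sum_abs _ _
      _ ≤ ∑ i, |b i| := by
          refine Finset.sum_le_sum fun i _ => ?_
          rw [abs_mul]
          rcases hω i with h | h <;> simp [h]
  have hgint : ∀ b, Integrable (g b) P := fun b =>
    integrable_of_ae_abs_bound (∑ i, |b i|) (hgmeas b).aestronglyMeasurable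
      (habs.mono fun ω hω => hω b)
  have hexpint : ∀ (c : ℝ) (b : EuclideanSpace ℝ (Fin n)),
      Integrable (fun ω => Real.exp (c * g b ω)) P := fun c b => by
    refine integrable_of_ae_abs_bound (Real.exp (|c| * ∑ i, |b i|))
      (((hgmeas b).const_mul c).exp).aestronglyMeasurable ?_
    filter_upwards [habs] with ω hω
    rw [abs_of_pos (Real.exp_pos _)]
    refine Real.exp_le_exp.mpr ?_
    calc c * g b ω ≤ |c * g b ω| := le_abs_self _
      _ = |c| * |g b ω| := abs_mul _ _
      _ ≤ |c| * ∑ i, |b i| := by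
          exact mul_le_mul_of_nonneg_left (hω b) (abs_nonneg c)
  -- sum of |b i| nonneg
  have habsnonneg : ∀ b : EuclideanSpace ℝ (Fin n), (0:ℝ) ≤ ∑ i, |b i| :=
    fun b => Finset.sum_nonneg fun i _ => abs_nonneg _
  -- the sup function
  set F : Ω → ℝ := fun ω => B.sup' hB (fun b => g b ω) with hFdef
  have hFmeas : Measurable F := by
    have := Finset.measurable_sup' hB (fun b _ => hgmeas b)
    convert this using 1
    ext ω
    rw [Finset.sup'_apply]
  set C : ℝ := B.sup' hB (fun b => ∑ i, |b i|) with hCdef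
  have hFabs : ∀ᵐ ω ∂P, |F ω| ≤ C := by
    filter_upwards [habs] with ω hω
    rw [abs_le]
    constructor
    · obtain ⟨b₀, hb₀⟩ := hB
      calc -C ≤ -(∑ i, |b₀ i|) := by
              simp only [neg_le_neg_iff]
              exact Finset.le_sup' (fun b : EuclideanSpace ℝ (Fin n) => ∑ i, |b i|) hb₀
        _ ≤ g b₀ ω := neg_le_of_abs_le (hω b₀)
        _ ≤ F ω := Finset.le_sup' (fun b => g b ω) hb₀
    · exact Finset.sup'_le _ _ fun b hb =>
        le_trans (le_trans (le_abs_self _) (hω b))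
          (Finset.le_sup' (fun b : EuclideanSpace ℝ (Fin n) => ∑ i, |b i|) hb)
  have hFint : Integrable F P :=
    integrable_of_ae_abs_bound C hFmeas.aestronglyMeasurable hFabs
  -- mgf bound for each b ∈ B, for any t
  set M : ℝ := B.sup' hB (fun b => ‖b‖) with hMdef
  have hM0 : 0 ≤ M := le_trans (norm_nonneg _) (Finset.le_sup' _ hB.choose_spec)
  have hmgf : ∀ (t : ℝ), ∀ b ∈ B,
      ∫ ω, Real.exp (t * g b ω) ∂P ≤ Real.exp (t^2 * M^2 / 2) := by
    intro t b hb
    set X : Fin n → Ω → ℝ := fun i ω => ε i ω * b i with hXdef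
    have hXmeas : ∀ i, Measurable (X i) := fun i => (hmeas i).mul_const _
    have hXindep : iIndepFun X P :=
      hindep.comp (fun i x => x * b i) (fun i => measurable_mul_const _)
    have hgX : g b = ∑ i, X i := by
      ext ω; simp [hgdef, hXdef, Finset.sum_apply]
    have h1 : ∫ ω, Real.exp (t * g b ω) ∂P = mgf (∑ i, X i) P t := by
      rw [hgX]; rfl
    rw [h1, hXindep.mgf_sum hXmeas Finset.univ]
    have h2 : ∀ i, mgf (X i) P t ≤ Real.exp ((t * b i)^2 / 2) := by
      intro i
      have : mgf (X i) P t = Real.cosh (t * b i) := by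
        unfold mgf
        have heq : ∀ ω, Real.exp (t * X i ω) = Real.exp ((t * b i) * ε i ω) := by
          intro ω; congr 1; simp [hXdef]; ring
        simp_rw [heq]
        rw [rademacher_integral P (ε i) (hmeas i) (hlaw i)
          (fun x => Real.exp ((t * b i) * x)) (by continuity)]
        rw [Real.cosh_eq]
        ring_nf
      rw [this]
      exact Real.cosh_le_exp_half_sq _
    calc ∏ i, mgf (X i) P t ≤ ∏ i, Real.exp ((t * b i)^2 / 2) :=
          Finset.prod_le_prod (fun i _ => mgf_nonneg) (fun i _ => h2 i)
      _ = Real.exp (∑ i, (t * b i)^2 / 2) := by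
          rw [Real.exp_sum]
      _ = Real.exp (t^2 * ‖b‖^2 / 2) := by
          congr 1
          rw [EuclideanSpace.norm_eq, Real.sq_sqrt (Finset.sum_nonneg fun i _ => sq_nonneg _)]
          rw [Finset.mul_sum, Finset.sum_div]
          congr 1; ext i
          rw [Real.norm_eq_abs, sq_abs]
          ring
      _ ≤ Real.exp (t^2 * M^2 / 2) := by
          apply Real.exp_le_exp.mpr
          have hbM : ‖b‖ ≤ M := Finset.le_sup' _ hb
          have : ‖b‖^2 ≤ M^2 := by nlinarith [norm_nonneg b]
          nlinarith [sq_nonneg t]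
  -- now case split
  have hcard1 : 1 ≤ B.card := hB.card_pos
  rcases eq_or_lt_of_le hcard1 with h1 | h2
  · -- single element
    obtain ⟨b, rfl⟩ := Finset.card_eq_one.mp h1.symm
    simp only [Finset.sup'_singleton, Finset.card_singleton, Nat.cast_one, Real.log_one,
      mul_zero, Real.sqrt_zero]
    have hεint : ∀ i, Integrable (fun ω => ε i ω * b i) P := by
      intro i
      refine integrable_of_ae_abs_bound (|b i|) ((hmeas i).mul_const _).aestronglyMeasurable ?_
      filter_upwards [hae] with ω hω
      rw [abs_mul]
      rcases hω i with h | h <;> simp [h]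
    have hFg : F = fun ω => ∑ i, ε i ω * b i := by
      funext ω
      exact Finset.sup'_singleton _
    have hI : ∫ ω, (∑ i, ε i ω * b i) ∂P = 0 := by
      rw [integral_finset_sum _ (fun i _ => hεint i)]
      have hzero : ∀ i : Fin n, ∫ ω, ε i ω * b i ∂P = 0 := by
        intro i
        rw [integral_mul_const]
        have : ∫ ω, ε i ω ∂P = 0 := by
          have := rademacher_integral P (ε i) (hmeas i) (hlaw i) id continuous_id
          simpa using this
        rw [this, zero_mul]
      simp [hzero]
    rw [hFg] at *
    exact le_of_eq hI
  · -- at least two elements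
    have hN2 : (2:ℝ) ≤ (B.card : ℝ) := by exact_mod_cast h2
    have hL : 0 < Real.log B.card := Real.log_pos (by linarith)
    rcases eq_or_lt_of_le hM0 with hM | hM
    · -- M = 0 : all elements are zero
      have hball : ∀ b ∈ B, ∀ ω, g b ω = 0 := by
        intro b hb ω
        have hbn : ‖b‖ ≤ M := Finset.le_sup' _ hb
        have : b = 0 := by
          have : ‖b‖ = 0 := le_antisymm (by rw [← hM] at hbn; exact hbn) (norm_nonneg b)
          exact norm_eq_zero.mp this
        subst this
        simp [hgdef]
      have : ∀ ω, F ω = 0 := by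
        intro ω
        have : B.sup' hB (fun b => g b ω) = B.sup' hB (fun _ => (0:ℝ)) :=
          Finset.sup'_congr hB rfl (fun b hb => hball b hb ω)
        rw [hFdef]
        simp only [this, Finset.sup'_const]
      calc ∫ ω, F ω ∂P = 0 := by simp [funext this]
        _ ≤ M * Real.sqrt (2 * Real.log B.card) := by
            rw [← hM]
            positivity
    · -- main case
      set L : ℝ := Real.log B.card with hLdef
      set t : ℝ := Real.sqrt (2 * L) / M with htdef
      have h2L : 0 < 2 * L := by linarith
      have hs : 0 < Real.sqrt (2 * L) := Real.sqrt_pos.mpr h2L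
      have ht : 0 < t := div_pos hs hM
      -- Jensen
      have hJ : Real.exp (t * ∫ ω, F ω ∂P) ≤ ∫ ω, Real.exp (t * F ω) ∂P := by
        have hconv : ConvexOn ℝ Set.univ Real.exp := convexOn_exp
        have hfi : Integrable (fun ω => t * F ω) P := hFint.const_mul t
        have hgi : Integrable (Real.exp ∘ (fun ω => t * F ω)) P := by
          refine integrable_of_ae_abs_bound (Real.exp (|t| * C))
            ((hFmeas.const_mul t).exp).aestronglyMeasurable ?_
          filter_upwards [hFabs] with ω hω
          simp only [Function.comp_apply]
          rw [abs_of_pos (Real.exp_pos _)]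
          refine Real.exp_le_exp.mpr ?_
          calc t * F ω ≤ |t * F ω| := le_abs_self _
            _ = |t| * |F ω| := abs_mul _ _
            _ ≤ |t| * C := mul_le_mul_of_nonneg_left hω (abs_nonneg t)
        have := hconv.map_integral_le (Real.continuous_exp.continuousOn) isClosed_univ
          (Filter.Eventually.of_forall fun ω => Set.mem_univ _) hfi hgi
        rw [integral_const_mul] at this
        exact this
      -- sum bound
      have hsum : ∫ ω, Real.exp (t * F ω) ∂P
          ≤ (B.card : ℝ) * Real.exp (t^2 * M^2 / 2) := by
        have hpt : ∀ ω, Real.exp (t * F ω) ≤ ∑ b ∈ B, Real.exp (t * g b ω) := by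
          intro ω
          obtain ⟨b₀, hb₀, hbeq⟩ := Finset.exists_mem_eq_sup' hB (fun b => g b ω)
          have : F ω = g b₀ ω := hbeq
          rw [this]
          exact Finset.single_le_sum (f := fun b => Real.exp (t * g b ω))
            (fun b _ => (Real.exp_pos _).le) hb₀
        calc ∫ ω, Real.exp (t * F ω) ∂P
            ≤ ∫ ω, ∑ b ∈ B, Real.exp (t * g b ω) ∂P := by
              refine integral_mono ?_ ?_ hpt
              · exact integrable_of_ae_abs_bound (Real.exp (|t| * C))
                  ((hFmeas.const_mul t).exp).aestronglyMeasurable (by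
                    filter_upwards [hFabs] with ω hω
                    rw [abs_of_pos (Real.exp_pos _)]
                    refine Real.exp_le_exp.mpr ?_
                    calc t * F ω ≤ |t * F ω| := le_abs_self _
                      _ = |t| * |F ω| := abs_mul _ _
                      _ ≤ |t| * C := mul_le_mul_of_nonneg_left hω (abs_nonneg t))
              · exact integrable_finset_sum _ (fun b _ => hexpint t b)
          _ = ∑ b ∈ B, ∫ ω, Real.exp (t * g b ω) ∂P := by
              rw [integral_finset_sum _ (fun b _ => hexpint t b)]
          _ ≤ ∑ b ∈ B, Real.exp (t^2 * M^2 / 2) :=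
              Finset.sum_le_sum (fun b hb => hmgf t b hb)
          _ = (B.card : ℝ) * Real.exp (t^2 * M^2 / 2) := by
              rw [Finset.sum_const, nsmul_eq_mul]
      -- combine
      have hNpos : (0:ℝ) < (B.card : ℝ) := by linarith
      have hkey : t * ∫ ω, F ω ∂P ≤ L + t^2 * M^2 / 2 := by
        have h3 : Real.exp (t * ∫ ω, F ω ∂P) ≤ (B.card : ℝ) * Real.exp (t^2 * M^2 / 2) :=
          le_trans hJ hsum
        have h4 := Real.log_le_log (Real.exp_pos _) h3
        rwa [Real.log_exp, Real.log_mul (ne_of_gt hNpos) (Real.exp_ne_zero _),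
          Real.log_exp] at h4
      have ht2 : t^2 * M^2 / 2 = L := by
        rw [htdef, div_pow, Real.sq_sqrt h2L.le]
        field_simp
      rw [ht2] at hkey
      -- conclude : t * I ≤ 2L, t = sqrt(2L)/M, so I ≤ M * sqrt(2L)
      have hfin : ∫ ω, F ω ∂P ≤ M * Real.sqrt (2 * L) := by
        have hss : Real.sqrt (2*L) * Real.sqrt (2*L) = 2*L := Real.mul_self_sqrt h2L.le
        have h4 := hkey
        rw [htdef, div_mul_eq_mul_div, div_le_iff₀ hM] at h4
        have h6 : ∫ ω, F ω ∂P ≤ ((L + L) * M) / Real.sqrt (2*L) :=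
          (le_div_iff₀ hs).mpr
            (by linarith [h4, mul_comm (Real.sqrt (2*L)) (∫ ω, F ω ∂P)])
        have h7 : ((L + L) * M) / Real.sqrt (2*L) = M * Real.sqrt (2*L) := by
          rw [div_eq_iff (ne_of_gt hs), mul_assoc, hss]
          ring
        rw [h7] at h6
        exact h6
      exact hfin
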